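/- Every nonzero monomial element t^c* of G(m) lying in (0 :_{G(m)} 𝓜^r) has exponent of the form c = ω_i + l g_1 for some index i with a_i > b_i and some integer l ≥ 0. -/

import Mathlib

/-!
Common setup: the numerical semigroup ring `R = k[[t^S]]`, its maximal ideal `m`,
the associated graded ring `G(m)` (realized as the Rees algebra `R[mt]` modulo
the extension of `m`, the standard presentation of `⊕_{h≥0} m^h/m^{h+1}`),
the homogeneous maximal ideal `𝓜`, the reduction number `r`, initial forms
`t^s*`, Apery sets, the invariants `a_i`, `b_i`, `l_i`, the order function,
the partial order `≤_M`, symmetry, `M`-purity, Buchsbaumness and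
Cohen-Macaulayness (via their characterizations `(0:𝓜) = (0:𝓜^r)` and
`(0:𝓜^r) = 0` valid in this one-dimensional graded setting).
-/

set_option maxHeartbeats 1000000
set_option synthInstance.maxHeartbeats 1000000

open scoped Pointwise
open Polynomial

noncomputable section

namespace NumSgrp

/-- The numerical semigroup `S` generated by `g 0 < g 1 < ⋯ < g n`. -/
def S {n : ℕ} (g : Fin (n + 1) → ℕ) : AddSubmonoid ℕ := AddSubmonoid.closure (Set.range g)

/-- `setM g h` is the `h`-fold sumset `M + ⋯ + M` of the maximal ideal
`M = S \ {0}`; by convention `setM g 0 = S` (corresponding to `m^0 = R`). -/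
def setM {n : ℕ} (g : Fin (n + 1) → ℕ) : ℕ → Set ℕ
  | 0 => (S g : Set ℕ)
  | h+1 => ({u : ℕ | u ∈ S g ∧ u ≠ 0} + setM g h : Set ℕ)

/-- `ordS g s` = ord(s) = max { h | s ∈ hM }. -/
def ordS {n : ℕ} (g : Fin (n + 1) → ℕ) (s : ℕ) : ℕ := sSup {h | s ∈ setM g h}

/-- `ap g i` = ω_i, the least element of `S` congruent to `i` modulo `g 0`. -/
def ap {n : ℕ} (g : Fin (n + 1) → ℕ) (i : ℕ) : ℕ := sInf {s | s ∈ S g ∧ s % g 0 = i}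

/-- The Apery set `Ap_{g_1}(S) = {ω_0, …, ω_{g_1-1}}`. -/
def apSet {n : ℕ} (g : Fin (n + 1) → ℕ) : Set ℕ := {s | ∃ i < g 0, s = ap g i}

/-- The blow-up `S' = ⟨g_1, g_2 - g_1, …, g_n - g_1⟩`. -/
def S' {n : ℕ} (g : Fin (n + 1) → ℕ) : AddSubmonoid ℕ :=
  AddSubmonoid.closure (insert (g 0) (Set.range fun i => g i - g 0))

/-- `ap' g i` = ω'_i, the least element of `S'` congruent to `i` modulo `g 0`. -/
def ap' {n : ℕ} (g : Fin (n + 1) → ℕ) (i : ℕ) : ℕ := sInf {s | s ∈ S' g ∧ s % g 0 = i}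

/-- The Apery set `Ap_{g_1}(S') = {ω'_0, …, ω'_{g_1-1}}`. -/
def apSet' {n : ℕ} (g : Fin (n + 1) → ℕ) : Set ℕ := {s | ∃ i < g 0, s = ap' g i}

/-- `aa g i` = a_i, the unique integer with ω_i = ω'_i + a_i g_1. -/
def aa {n : ℕ} (g : Fin (n + 1) → ℕ) (i : ℕ) : ℕ := (ap g i - ap' g i) / g 0

/-- `bb g i` = b_i = ord(ω_i). -/
def bb {n : ℕ} (g : Fin (n + 1) → ℕ) (i : ℕ) : ℕ := ordS g (ap g i)

/-- The partial order `u ≤_M u'`: there is `s ∈ S` with `u + s = u'` and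
`ord u + ord s = ord u'`. -/
def leM {n : ℕ} (g : Fin (n + 1) → ℕ) (u v : ℕ) : Prop :=
  ∃ s ∈ S g, u + s = v ∧ ordS g u + ordS g s = ordS g v

/-- `maxAp_M(S)`: the maximal elements of the Apery set w.r.t. `≤_M`. -/
def maxAp {n : ℕ} (g : Fin (n + 1) → ℕ) : Set ℕ :=
  {u | u ∈ apSet g ∧ ∀ v ∈ apSet g, leM g u v → v = u}

/-- `S` is `M`-pure: all elements of `maxAp_M(S)` have the same order. -/
def MPure {n : ℕ} (g : Fin (n + 1) → ℕ) : Prop :=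
  ∀ u ∈ maxAp g, ∀ v ∈ maxAp g, ordS g u = ordS g v

/-- `S` viewed inside `ℤ`. -/
def SZ {n : ℕ} (g : Fin (n + 1) → ℕ) : Set ℤ := {x | ∃ s ∈ S g, (s : ℤ) = x}

/-- The Frobenius number `g(S) = max (ℤ \ S)`. -/
def frob {n : ℕ} (g : Fin (n + 1) → ℕ) : ℤ := sSup {x : ℤ | x ∉ SZ g}

/-- `S` is symmetric: for every `x ∈ ℤ`, `x ∉ S` implies `g(S) - x ∈ S`. -/
def IsSymm {n : ℕ} (g : Fin (n + 1) → ℕ) : Prop :=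
  ∀ x : ℤ, x ∉ SZ g → frob g - x ∈ SZ g

/-- Hypotheses: `g 0 < g 1 < ⋯ < g n` is a minimal system of generators with
gcd 1, so `S` is a numerical semigroup minimally generated by the `g i`. -/
structure MinGen {n : ℕ} (g : Fin (n + 1) → ℕ) : Prop where
  smono : StrictMono g
  minimal : ∀ i, g i ∉ AddSubmonoid.closure (Set.range g \ {g i})
  gcdeq : Finset.univ.gcd g = 1

variable (k : Type*) [Field k] {n : ℕ} (g : Fin (n + 1) → ℕ)

/-- `R = k[[t^S]]`: the subalgebra of `k[[t]]` of power series supported in `S`. -/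
def Rsub : Subalgebra k (PowerSeries k) where
  carrier := {f | ∀ i, PowerSeries.coeff (R := k) i f ≠ 0 → i ∈ S g}
  zero_mem' := by intro i hi; simp at hi
  one_mem' := by
    intro i hi
    by_cases h : i = 0
    · exact h ▸ (S g).zero_mem
    · rw [PowerSeries.coeff_one, if_neg h] at hi; exact absurd rfl hi
  add_mem' := by
    intro a b ha hb i hi
    rw [map_add] at hi
    by_cases h : PowerSeries.coeff (R := k) i a ≠ 0
    · exact ha i h
    · push_neg at h
      rw [h, zero_add] at hi
      exact hb i hi
  mul_mem' := by
    intro a b ha hb i hi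
    rw [PowerSeries.coeff_mul] at hi
    obtain ⟨p, hp, hne⟩ := Finset.exists_ne_zero_of_sum_ne_zero hi
    have h1 := ha p.1 (left_ne_zero_of_mul hne)
    have h2 := hb p.2 (right_ne_zero_of_mul hne)
    exact (Finset.HasAntidiagonal.mem_antidiagonal.mp hp) ▸ add_mem h1 h2
  algebraMap_mem' := by
    intro r i hi
    by_cases h : i = 0
    · exact h ▸ (S g).zero_mem
    · exfalso
      apply hi
      have : (algebraMap k (PowerSeries k)) r = PowerSeries.C (R := k) r := rfl
      rw [this, PowerSeries.coeff_C, if_neg h]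

open Classical in
/-- `t^s` as an element of `R` (defined to be `0` if `s ∉ S`). -/
def tR (s : ℕ) : Rsub k g :=
  if h : s ∈ S g then
    ⟨PowerSeries.monomial (R := k) s 1, by
      intro i hi
      rw [PowerSeries.coeff_monomial] at hi
      split at hi
      · next heq => exact heq ▸ h
      · exact absurd rfl hi⟩
  else 0

/-- `m = (t^{g_1}, …, t^{g_n})`, the maximal ideal of `R`. -/
def mI : Ideal (Rsub k g) := Ideal.span (Set.range fun i => tR k g (g i))

lemma tR_mul {s u : ℕ} (hs : s ∈ S g) (hu : u ∈ S g) :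
    tR k g (s + u) = tR k g s * tR k g u := by
  simp only [tR, dif_pos hs, dif_pos hu, dif_pos (add_mem hs hu)]
  apply Subtype.ext
  simp only [MulMemClass.coe_mul]
  show (PowerSeries.monomial (R := k) (s + u)) (1 : k) =
    (PowerSeries.monomial (R := k) s) 1 * (PowerSeries.monomial (R := k) u) 1
  rw [← PowerSeries.X_pow_eq, ← PowerSeries.X_pow_eq, ← PowerSeries.X_pow_eq, pow_add]

lemma setM_subset : ∀ h : ℕ, setM g h ⊆ (S g : Set ℕ) := by
  intro h
  induction h with
  | zero => exact fun s hs => hs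
  | succ h ih =>
    rintro s ⟨u, hu, v, hv, huv⟩
    have : u + v = s := huv
    exact this ▸ add_mem hu.1 (ih hv)

lemma le_of_mem_setM : ∀ h : ℕ, ∀ s ∈ setM g h, h ≤ s := by
  intro h
  induction h with
  | zero => exact fun s _ => Nat.zero_le s
  | succ h ih =>
    rintro s ⟨u, hu, v, hv, huv⟩
    have hsum : u + v = s := huv
    have h1 : 1 ≤ u := Nat.one_le_iff_ne_zero.mpr hu.2
    have h2 := ih v hv
    omega

lemma tR_mem_mI {u : ℕ} (hu : u ∈ S g) (hne : u ≠ 0) : tR k g u ∈ mI k g := by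
  have key : ∀ (x : ℕ) (_ : x ∈ S g), x = 0 ∨ tR k g x ∈ mI k g := by
    intro x hx
    induction hx using AddSubmonoid.closure_induction with
    | mem y hy =>
      obtain ⟨i, rfl⟩ := hy
      exact Or.inr (Ideal.subset_span ⟨i, rfl⟩)
    | zero => exact Or.inl rfl
    | add x y hx hy px py =>
      rcases px with rfl | px
      · rcases py with rfl | py
        · exact Or.inl rfl
        · exact Or.inr (by rwa [zero_add])
      · refine Or.inr ?_
        rw [tR_mul k g hx hy]
        exact Ideal.mul_mem_right _ _ px
  rcases key u hu with rfl | h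
  · exact absurd rfl hne
  · exact h

lemma tR_mem_pow_of_setM : ∀ h : ℕ, ∀ s ∈ setM g h, tR k g s ∈ (mI k g) ^ h := by
  intro h
  induction h with
  | zero =>
    intro s _
    rw [pow_zero, Ideal.one_eq_top]
    exact Submodule.mem_top
  | succ h ih =>
    rintro s ⟨u, hu, v, hv, huv⟩
    have hsum : u + v = s := huv
    rw [← hsum, tR_mul k g hu.1 (setM_subset g h hv), pow_succ, mul_comm (tR k g u)]
    exact Ideal.mul_mem_mul (ih v hv) (tR_mem_mI k g hu.1 hu.2)

lemma mem_setM_ordS {s : ℕ} (hs : s ∈ S g) : s ∈ setM g (ordS g s) := by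
  have : ordS g s ∈ {h | s ∈ setM g h} :=
    Nat.sSup_mem (⟨0, hs⟩ : Set.Nonempty {h | s ∈ setM g h})
      ⟨s, fun h hh => le_of_mem_setM g h s hh⟩
  exact this

lemma tR_mem_pow (s : ℕ) : tR k g s ∈ (mI k g) ^ (ordS g s) := by
  by_cases hs : s ∈ S g
  · exact tR_mem_pow_of_setM k g _ s (mem_setM_ordS g hs)
  · rw [tR, dif_neg hs]
    exact zero_mem _

/-- `G(m) = ⊕_{h ≥ 0} m^h/m^{h+1}`, realized as the Rees algebra `R[mt]`
modulo the extension of `m` (the standard presentation of the associated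
graded ring of a local ring). -/
abbrev grG : Type _ :=
  (reesAlgebra (mI k g)) ⧸
    (Ideal.map (algebraMap (Rsub k g) (reesAlgebra (mI k g))) (mI k g))

/-- The homogeneous maximal ideal `𝓜 = m/m² ⊕ m²/m³ ⊕ ⋯` of `G(m)`: the image
of the ideal of elements of the Rees algebra whose degree-0 coefficient lies
in `m`. -/
def MM : Ideal (grG k g) :=
  Ideal.map (Ideal.Quotient.mk _)
    (Ideal.comap ((Polynomial.evalRingHom (0 : Rsub k g)).comp
      (reesAlgebra (mI k g)).val.toRingHom) (mI k g))

/-- The reduction number `r` of `m`: the least `r` with `m^{r+1} = t^{g_1}·m^r`. -/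
def rnum : ℕ :=
  sInf {j | (mI k g) ^ (j + 1) = Ideal.span {tR k g (g 0)} * (mI k g) ^ j}

/-- The initial form `t^s*` of `t^s` in `G(m)`, i.e. the image of `t^s` in
`m^{ord(s)}/m^{ord(s)+1}` (the degree-`ord(s)` component of `G(m)`). -/
def tstar (s : ℕ) : grG k g :=
  Ideal.Quotient.mk _
    ⟨(Polynomial.monomial (ordS g s)) (tR k g s),
      reesAlgebra.monomial_mem.mpr (tR_mem_pow k g s)⟩

/-- `(0 :_{G(m)} 𝓜^r) = H⁰_𝓜(G(m))`. -/
def annM : Ideal (grG k g) := Submodule.colon ⊥ ((MM k g ^ rnum k g : Ideal (grG k g)) : Set (grG k g))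

/-- `(0 :_{G(m)} 𝓜)`. -/
def ann1 : Ideal (grG k g) := Submodule.colon ⊥ ((MM k g : Ideal (grG k g)) : Set (grG k g))

/-- `G(m)` is Buchsbaum iff `(0 :_{G(m)} 𝓜) = (0 :_{G(m)} 𝓜^r)`. -/
def IsBuchsbaum : Prop := ann1 k g = annM k g

/-- `G(m)` is Cohen-Macaulay iff `(0 :_{G(m)} 𝓜^r) = 0`. -/
def IsCM : Prop := annM k g = ⊥

/-- `l_i = max { l | t^{ω_i + l g_1}* ∈ (0 :_{G(m)} 𝓜^r) }`. -/
def lℓ (i : ℕ) : ℕ := sSup {l | tstar k g (ap g i + l * g 0) ∈ annM k g}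

/-- The length of a `G(m)`-module: the Krull dimension of its lattice of
submodules, i.e. the longest length of a chain of submodules. -/
def lenOf (M : Type*) [AddCommGroup M] [Module (grG k g) M] : WithBot ℕ∞ :=
  Order.krullDim (Submodule (grG k g) M)

/-- The socle `(0 :_{G/ξG} 𝓜) = ((ξ) :_G 𝓜)/(ξ)` of `G(m)/ξ·G(m)`, where
`ξ = t^{g_1}*` is the canonical degree-one homogeneous parameter of `G(m)`. -/
abbrev socQ : Type _ :=
  ↥(Submodule.colon (Ideal.span {tstar k g (g 0)}) ((MM k g : Ideal (grG k g)) : Set (grG k g))) ⧸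
    (Submodule.comap
      (Submodule.colon (Ideal.span {tstar k g (g 0)}) ((MM k g : Ideal (grG k g)) : Set (grG k g))).subtype
      (Ideal.span {tstar k g (g 0)}))

/-- `G(m)` is Gorenstein: Cohen-Macaulay of type 1, i.e. Cohen-Macaulay and
the socle of `G(m)` modulo the homogeneous parameter `ξ = t^{g_1}*` has
length 1 as a `G(m)`-module. -/
def IsGor : Prop := IsCM k g ∧ lenOf k g (socQ k g) = 1


/-! ### Auxiliary lemmas -/

lemma mem_S_gen (i : Fin (n + 1)) : g i ∈ S g :=
  AddSubmonoid.subset_closure ⟨i, rfl⟩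

lemma g0_pos (hg : MinGen g) : 0 < g 0 := by
  rcases Nat.eq_zero_or_pos (g 0) with h | h
  · exact absurd (by rw [h]; exact zero_mem _) (hg.minimal 0)
  · exact h

lemma S_subset_S' (hg : MinGen g) {s : ℕ} (hs : s ∈ S g) : s ∈ S' g := by
  induction hs using AddSubmonoid.closure_induction with
  | mem x hx =>
    obtain ⟨i, rfl⟩ := hx
    have hle : g 0 ≤ g i := hg.smono.monotone (Fin.zero_le i)
    have : g i = (g i - g 0) + g 0 := by omega
    rw [this]
    exact add_mem (AddSubmonoid.subset_closure (Set.mem_insert_of_mem _ ⟨i, rfl⟩))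
      (AddSubmonoid.subset_closure (Set.mem_insert _ _))
  | zero => exact zero_mem _
  | add x y _ _ px py => exact add_mem px py

lemma sub_g0_mem_S' (hg : MinGen g) {s : ℕ} (hs : s ∈ S g) :
    s = 0 ∨ (g 0 ≤ s ∧ s - g 0 ∈ S' g) := by
  induction hs using AddSubmonoid.closure_induction with
  | mem x hx =>
    obtain ⟨i, rfl⟩ := hx
    right
    exact ⟨hg.smono.monotone (Fin.zero_le i),
      AddSubmonoid.subset_closure (Set.mem_insert_of_mem _ ⟨i, rfl⟩)⟩
  | zero => exact Or.inl rfl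
  | add x y hx hy px py =>
    rcases px with rfl | ⟨hx1, hx2⟩
    · simpa using py
    rcases py with rfl | ⟨hy1, hy2⟩
    · right; simpa using ⟨hx1, hx2⟩
    · right
      refine ⟨by omega, ?_⟩
      have : x + y - g 0 = (x - g 0) + y := by omega
      rw [this]
      exact add_mem hx2 (S_subset_S' g hg hy)

lemma setM_sub (hg : MinGen g) : ∀ h s, s ∈ setM g h → h * g 0 ≤ s ∧ s - h * g 0 ∈ S' g := by
  intro h
  induction h with
  | zero =>
    intro s hs
    refine ⟨by simp, ?_⟩
    simpa using S_subset_S' g hg hs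
  | succ h ih =>
    rintro s ⟨u, hu, v, hv, huv⟩
    have hsum : u + v = s := huv
    obtain ⟨h1, h2⟩ := ih v hv
    rcases sub_g0_mem_S' g hg hu.1 with rfl | ⟨hu1, hu2⟩
    · exact absurd rfl hu.2
    have e1 : (h + 1) * g 0 = h * g 0 + g 0 := by ring
    constructor
    · omega
    · have : s - (h + 1) * g 0 = (u - g 0) + (v - h * g 0) := by omega
      rw [this]
      exact add_mem hu2 h2

lemma mem_setM_add_mul (hg : MinGen g) {s h : ℕ} (hs : s ∈ setM g h) (l : ℕ) :
    s + l * g 0 ∈ setM g (h + l) := by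
  induction l with
  | zero => simpa using hs
  | succ l ih =>
    have e : s + (l + 1) * g 0 = g 0 + (s + l * g 0) := by ring
    have : g 0 + (s + l * g 0) ∈ setM g ((h + l) + 1) :=
      ⟨g 0, ⟨mem_S_gen g 0, (g0_pos g hg).ne'⟩, s + l * g 0, ih, rfl⟩
    rw [show h + (l + 1) = (h + l) + 1 by ring, e]
    exact this

lemma ord_ge {s h : ℕ} (hs : s ∈ setM g h) : h ≤ ordS g s :=
  le_csSup ⟨s, fun b hb => le_of_mem_setM g b s hb⟩ hs

lemma tR_zero_eq_one : tR k g 0 = 1 := by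
  have h0 : (0 : ℕ) ∈ S g := zero_mem _
  apply Subtype.ext
  simp only [tR, dif_pos h0]
  show (PowerSeries.monomial (R := k) 0) (1 : k) = 1
  simp

lemma S_mul_mem {u : ℕ} (hu : u ∈ S g) (r : ℕ) : r * u ∈ S g := by
  induction r with
  | zero => simpa using zero_mem (S g)
  | succ r ih =>
    have e : (r + 1) * u = r * u + u := by ring
    rw [e]
    exact add_mem ih hu

lemma tR_pow {u : ℕ} (hu : u ∈ S g) (r : ℕ) : tR k g u ^ r = tR k g (r * u) := by
  induction r with
  | zero => simpa using (tR_zero_eq_one k g).symm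
  | succ r ih =>
    rw [pow_succ, ih, ← tR_mul k g (S_mul_mem g hu r) hu]
    congr 1
    ring

lemma mI_support (hg : MinGen g) :
    ∀ f ∈ mI k g, ∀ s, PowerSeries.coeff (R := k) s (f : PowerSeries k) ≠ 0 → s ∈ S g ∧ s ≠ 0 := by
  intro f hf
  induction hf using Submodule.span_induction with
  | mem x hx =>
    obtain ⟨i, rfl⟩ := hx
    intro s hs
    simp only [tR, dif_pos (mem_S_gen g i)] at hs
    have : PowerSeries.coeff (R := k) s ((PowerSeries.monomial (R := k) (g i)) (1 : k)) ≠ 0 := hs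
    rw [PowerSeries.coeff_monomial] at this
    split at this
    · next heq =>
      subst heq
      refine ⟨mem_S_gen g i, ?_⟩
      have := hg.smono.monotone (Fin.zero_le i)
      have := g0_pos g hg
      omega
    · exact absurd rfl this
  | zero => intro s hs; simp at hs
  | add x y _ _ px py =>
    intro s hs
    rw [AddMemClass.coe_add, map_add] at hs
    by_cases h : PowerSeries.coeff (R := k) s (x : PowerSeries k) ≠ 0
    · exact px s h
    · push_neg at h
      rw [h, zero_add] at hs
      exact py s hs
  | smul a x _ px =>
    intro s hs
    rw [smul_eq_mul, MulMemClass.coe_mul, PowerSeries.coeff_mul] at hs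
    obtain ⟨p, hp, hne⟩ := Finset.exists_ne_zero_of_sum_ne_zero hs
    have h1 := a.2 p.1 (left_ne_zero_of_mul hne)
    have h2 := px p.2 (right_ne_zero_of_mul hne)
    have := Finset.HasAntidiagonal.mem_antidiagonal.mp hp
    refine this ▸ ⟨add_mem h1 h2.1, ?_⟩
    have := h2.2
    omega

lemma pow_support (hg : MinGen g) :
    ∀ j, ∀ f ∈ (mI k g) ^ j, ∀ s, PowerSeries.coeff (R := k) s (f : PowerSeries k) ≠ 0 →
      s ∈ setM g j := by
  intro j
  induction j with
  | zero =>
    intro f _ s hs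
    exact f.2 s hs
  | succ j ih =>
    intro f hf
    rw [pow_succ] at hf
    refine Submodule.mul_induction_on
      (C := fun (f : Rsub k g) => ∀ s, PowerSeries.coeff (R := k) s (f : PowerSeries k) ≠ 0 → s ∈ setM g (j + 1))
      hf ?_ ?_
    · intro a ha b hb s hs
      rw [MulMemClass.coe_mul, PowerSeries.coeff_mul] at hs
      obtain ⟨p, hp, hne⟩ := Finset.exists_ne_zero_of_sum_ne_zero hs
      have h1 := ih a ha p.1 (left_ne_zero_of_mul hne)
      have h2 := mI_support k g hg b hb p.2 (right_ne_zero_of_mul hne)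
      have hps := Finset.HasAntidiagonal.mem_antidiagonal.mp hp
      exact ⟨p.2, h2, p.1, h1, by show p.2 + p.1 = s; omega⟩
    · intro x y px py s hs
      rw [AddMemClass.coe_add, map_add] at hs
      by_cases h : PowerSeries.coeff (R := k) s (x : PowerSeries k) ≠ 0
      · exact px s h
      · push_neg at h
        rw [h, zero_add] at hs
        exact py s hs

lemma tR_mem_pow_imp {s j : ℕ} (hg : MinGen g) (hs : s ∈ S g)
    (hmem : tR k g s ∈ (mI k g) ^ j) : s ∈ setM g j := by
  apply pow_support k g hg j _ hmem s
  rw [tR, dif_pos hs]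
  have : PowerSeries.coeff (R := k) s ((PowerSeries.monomial (R := k) s) (1 : k)) = 1 := by
    rw [PowerSeries.coeff_monomial, if_pos rfl]
  rw [this]
  exact one_ne_zero

lemma J_coeff :
    ∀ q ∈ Ideal.map (algebraMap (Rsub k g) (reesAlgebra (mI k g))) (mI k g),
      ∀ h, ((q : Polynomial (Rsub k g)).coeff h) ∈ (mI k g) ^ (h + 1) := by
  intro q hq
  have hq' : q ∈ Submodule.span (reesAlgebra (mI k g))
      ((algebraMap (Rsub k g) (reesAlgebra (mI k g))) '' (mI k g)) := hq
  clear hq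
  induction hq' using Submodule.span_induction with
  | mem x hx =>
    obtain ⟨a, ha, rfl⟩ := hx
    intro h
    have hC : ((algebraMap (Rsub k g) (reesAlgebra (mI k g)) a : reesAlgebra (mI k g)) :
        Polynomial (Rsub k g)) = Polynomial.C a := rfl
    rw [hC, Polynomial.coeff_C]
    split
    · next hh => subst hh; simpa using ha
    · exact zero_mem _
  | zero => intro h; simp
  | add x y _ _ px py =>
    intro h
    rw [AddMemClass.coe_add, Polynomial.coeff_add]
    exact add_mem (px h) (py h)
  | smul a x _ px =>
    intro h
    rw [smul_eq_mul, MulMemClass.coe_mul, Polynomial.coeff_mul]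
    apply Ideal.sum_mem
    intro p hp
    have hps := Finset.HasAntidiagonal.mem_antidiagonal.mp hp
    have h1 : ((a : Polynomial (Rsub k g)).coeff p.1) ∈ (mI k g) ^ p.1 :=
      (mem_reesAlgebra_iff (mI k g) (a : Polynomial (Rsub k g))).mp a.2 p.1
    have h2 := px p.2
    have := Ideal.mul_mem_mul h1 h2
    rw [← pow_add] at this
    have he : p.1 + (p.2 + 1) = h + 1 := by omega
    rw [he] at this
    exact this

lemma vanish (hg : MinGen g) {c : ℕ} (hcS : c ∈ S g) (hc : tstar k g c ∈ annM k g) :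
    c + rnum k g * g 0 ∈ setM g (ordS g c + rnum k g + 1) := by
  set r := rnum k g with hr
  set d := ordS g c with hd
  have hg0S : g 0 ∈ S g := mem_S_gen g 0
  have hg0ne : g 0 ≠ 0 := (g0_pos g hg).ne'
  have hrg0S : r * g 0 ∈ S g := S_mul_mem g hg0S r
  have hcr : c + r * g 0 ∈ setM g (d + r) :=
    mem_setM_add_mul g hg (mem_setM_ordS g hcS) r
  -- the degree-one element η = t^{g 0} * (in degree 1)
  have hmemη : (Polynomial.monomial 1) (tR k g (g 0)) ∈ reesAlgebra (mI k g) :=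
    reesAlgebra.monomial_mem.mpr (by rw [pow_one]; exact tR_mem_mI k g hg0S hg0ne)
  set ηR : reesAlgebra (mI k g) := ⟨_, hmemη⟩ with hηR
  set η : grG k g := Ideal.Quotient.mk _ ηR with hη
  have hηMM : η ∈ MM k g := by
    apply Ideal.mem_map_of_mem
    rw [Ideal.mem_comap]
    have : ((Polynomial.evalRingHom (0 : Rsub k g)).comp
        (reesAlgebra (mI k g)).val.toRingHom) ηR
        = Polynomial.eval (0 : Rsub k g) ((Polynomial.monomial 1) (tR k g (g 0))) := rfl
    rw [this, Polynomial.eval_monomial]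
    simpa using zero_mem (mI k g)
  have hzero : tstar k g c * η ^ r = 0 := by
    have h1 := Submodule.mem_colon.mp hc (η ^ r) (Ideal.pow_mem_pow hηMM r)
    rw [Submodule.mem_bot] at h1
    rw [← smul_eq_mul]
    exact h1
  -- compute the product as a monomial element
  have hmemP : (Polynomial.monomial (d + r)) (tR k g (c + r * g 0)) ∈ reesAlgebra (mI k g) :=
    reesAlgebra.monomial_mem.mpr (tR_mem_pow_of_setM k g (d + r) _ hcr)
  have hprod : tstar k g c * η ^ r = Ideal.Quotient.mk _ (⟨_, hmemP⟩ : reesAlgebra (mI k g)) := by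
    rw [tstar, hη, ← map_pow, ← map_mul]
    congr 1
    apply Subtype.ext
    rw [MulMemClass.coe_mul, SubmonoidClass.coe_pow, hηR]
    show (Polynomial.monomial (ordS g c)) (tR k g c) *
        ((Polynomial.monomial 1) (tR k g (g 0))) ^ r
        = (Polynomial.monomial (d + r)) (tR k g (c + r * g 0))
    rw [Polynomial.monomial_pow, one_mul, tR_pow k g hg0S r,
      Polynomial.monomial_mul_monomial, ← tR_mul k g hcS hrg0S, ← hd]
  rw [hprod, Ideal.Quotient.eq_zero_iff_mem] at hzero
  have := J_coeff k g _ hzero (d + r)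
  rw [Polynomial.coeff_monomial, if_pos rfl] at this
  exact tR_mem_pow_imp k g hg (add_mem hcS hrg0S) this

/-- Lemma 2b. Every nonzero monomial element `t^c*` of `G(m)`
lying in `(0 :_{G(m)} 𝓜^r)` has exponent of the form `c = ω_i + l g_1` for some
index `i` with `a_i > b_i` and some integer `l ≥ 0`. -/
theorem statement1 {k : Type*} [Field k] [Infinite k] {n : ℕ} (g : Fin (n + 1) → ℕ)
    (hg : MinGen g) (c : ℕ) (hne : tstar k g c ≠ 0) (hc : tstar k g c ∈ annM k g) :
    ∃ i l : ℕ, i < g 0 ∧ bb g i < aa g i ∧ c = ap g i + l * g 0 := by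
  classical
  have hg0 : 0 < g 0 := g0_pos g hg
  have hcS : c ∈ S g := by
    by_contra hcs
    apply hne
    have ht : tR k g c = 0 := dif_neg hcs
    unfold tstar
    have hz : (⟨(Polynomial.monomial (ordS g c)) (tR k g c),
        reesAlgebra.monomial_mem.mpr (tR_mem_pow k g c)⟩ : reesAlgebra (mI k g)) = 0 := by
      apply Subtype.ext
      show (Polynomial.monomial (ordS g c)) (tR k g c)
        = ((0 : reesAlgebra (mI k g)) : Polynomial (Rsub k g))
      rw [ht, map_zero]
      rfl
    rw [hz, map_zero]
  set i := c % g 0 with hi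
  have hilt : i < g 0 := Nat.mod_lt _ hg0
  have hNe : {s | s ∈ S g ∧ s % g 0 = i}.Nonempty := ⟨c, hcS, rfl⟩
  have hap : ap g i ∈ S g ∧ ap g i % g 0 = i := Nat.sInf_mem hNe
  obtain ⟨hapS, hapmod⟩ := hap
  have haple : ap g i ≤ c := Nat.sInf_le ⟨hcS, rfl⟩
  obtain ⟨l, hl⟩ : ∃ l, c = ap g i + l * g 0 := by
    obtain ⟨m, hm⟩ := (Nat.modEq_iff_dvd' haple).mp (hapmod.trans hi)
    refine ⟨m, ?_⟩
    have h2 : ap g i + g 0 * m = c := by rw [← hm]; exact Nat.add_sub_cancel' haple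
    rw [mul_comm]; omega
  have hapS' : ap g i ∈ S' g := S_subset_S' g hg hapS
  have hNe' : {s | s ∈ S' g ∧ s % g 0 = i}.Nonempty := ⟨ap g i, hapS', hapmod⟩
  have hap' : ap' g i ∈ S' g ∧ ap' g i % g 0 = i := Nat.sInf_mem hNe'
  have hle' : ap' g i ≤ ap g i := Nat.sInf_le ⟨hapS', hapmod⟩
  have haa : ap g i = ap' g i + aa g i * g 0 := by
    obtain ⟨m, hm⟩ := (Nat.modEq_iff_dvd' hle').mp (hap'.2.trans hapmod.symm)
    have h3 : aa g i = m := by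
      rw [aa, hm]
      exact Nat.mul_div_cancel_left m hg0
    have h2 : ap' g i + g 0 * m = ap g i := by rw [← hm]; exact Nat.add_sub_cancel' hle'
    rw [h3, mul_comm]; omega
  have upper : ∀ u h, u ∈ setM g h → u % g 0 = i → h * g 0 + ap' g i ≤ u := by
    intro u h hu hmod
    obtain ⟨h1, h2⟩ := setM_sub g hg h u hu
    have hmod2 : (u - h * g 0) % g 0 = i := by
      have h3 := Nat.add_mul_mod_self_right (u - h * g 0) h (g 0)
      rw [Nat.sub_add_cancel h1] at h3
      rw [← h3]; exact hmod
    have h4 := Nat.sInf_le (show u - h * g 0 ∈ {s | s ∈ S' g ∧ s % g 0 = i} from ⟨h2, hmod2⟩)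
    have h5 : ap' g i ≤ u - h * g 0 := h4
    omega
  have hbbl : c ∈ setM g (bb g i + l) := by
    rw [hl]
    exact mem_setM_add_mul g hg (mem_setM_ordS g hapS) l
  have hdge : bb g i + l ≤ ordS g c := ord_ge g hbbl
  refine ⟨i, l, hilt, ?_, hl⟩
  by_contra hba
  push_neg at hba
  have hba2 : bb g i ≤ aa g i := by
    have h0 := upper (ap g i) (bb g i) (mem_setM_ordS g hapS) hapmod
    have hmul : bb g i * g 0 ≤ aa g i * g 0 := by omega
    exact Nat.le_of_mul_le_mul_right hmul hg0
  have heq : aa g i = bb g i := le_antisymm hba hba2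
  have hv := vanish k g hg hcS hc
  set r := rnum k g with hr
  set d := ordS g c with hd
  have hmodc0 : (c + r * g 0) % g 0 = c % g 0 := Nat.add_mul_mod_self_right c r (g 0)
  have h1 := upper (c + r * g 0) (d + r + 1) hv (hmodc0.trans hi.symm)
  have e1 : (aa g i + l + r) * g 0 = aa g i * g 0 + l * g 0 + r * g 0 := by ring
  have hmul2 : (d + r + 1) * g 0 ≤ (aa g i + l + r) * g 0 := by omega
  have hfin : d + r + 1 ≤ aa g i + l + r := Nat.le_of_mul_le_mul_right hmul2 hg0
  omega

end NumSgrp
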